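/- Let n ≥ 1 and let Ω : ℝ → Matrix (Fin n) (Fin n) ℝ be a curve of skew-symmetric matrices (Ω(t)ᵀ = −Ω(t) for all t). Suppose Q, P : ℝ → Matrix (Fin n) (Fin n) ℝ are differentiable and satisfy the symmetric rigid body equations Q'(t) = Q(t)·Ω(t) and P'(t) = P(t)·Ω(t) for all t. Then M(t) := Q(t)ᵀ·P(t) − P(t)ᵀ·Q(t) satisfies the rigid body (Euler) equation M'(t) = M(t)·Ω(t) − Ω(t)·M(t) for all t. -/

import Mathlib

open Matrix

/-- The symmetric rigid body equations `Q' = QΩ`, `P' = PΩ` imply the rigid body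
(Euler) equation `M' = MΩ - ΩM` for `M = QᵀP - PᵀQ`. -/
theorem symmetric_rigid_body_implies_euler
    (n : ℕ) (hn : 1 ≤ n)
    (Ω Q P : ℝ → Matrix (Fin n) (Fin n) ℝ)
    (hΩ : ∀ t, (Ω t)ᵀ = -Ω t)
    (hQ : ∀ t i j, HasDerivAt (fun s => Q s i j) ((Q t * Ω t) i j) t)
    (hP : ∀ t i j, HasDerivAt (fun s => P s i j) ((P t * Ω t) i j) t)
    (M : ℝ → Matrix (Fin n) (Fin n) ℝ)
    (hM : ∀ t, M t = (Q t)ᵀ * P t - (P t)ᵀ * Q t) :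
    ∀ t i j, HasDerivAt (fun s => M s i j) ((M t * Ω t - Ω t * M t) i j) t := by
  intro t i j
  have key : (fun s => M s i j)
      = fun s => (∑ k, Q s k i * P s k j) - ∑ k, P s k i * Q s k j := by
    funext s
    simp [hM, mul_apply]
  rw [key]
  have h1 : HasDerivAt (fun s => ∑ k, Q s k i * P s k j)
      (∑ k, ((Q t * Ω t) k i * P t k j + Q t k i * (P t * Ω t) k j)) t :=
    HasDerivAt.fun_sum fun k _ => (hQ t k i).mul (hP t k j)
  have h2 : HasDerivAt (fun s => ∑ k, P s k i * Q s k j)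
      (∑ k, ((P t * Ω t) k i * Q t k j + P t k i * (Q t * Ω t) k j)) t :=
    HasDerivAt.fun_sum fun k _ => (hP t k i).mul (hQ t k j)
  have h := h1.fun_sub h2
  convert h using 1
  · exact rfl
  · exact rfl
  have key2 : M t * Ω t - Ω t * M t
      = (Q t * Ω t)ᵀ * P t + (Q t)ᵀ * (P t * Ω t)
        - ((P t * Ω t)ᵀ * Q t + (P t)ᵀ * (Q t * Ω t)) := by
    rw [hM t]
    simp only [transpose_mul, hΩ t]
    noncomm_ring
  rw [key2]
  simp [mul_apply, Finset.sum_add_distrib, mul_comm]
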